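/- For a homogeneous function p : ℝⁿ → ℝ of even degree d ≥ 1 that is continuous, quasiconvexity, pseudoconvexity, and convexity are all equivalent. -/

import Mathlib

open Set Filter

variable {n d : ℕ} {p : EuclideanSpace ℝ (Fin n) → ℝ}

-- p 0 = 0
lemma aux_p0 (hd1 : 1 ≤ d)
    (hhom : ∀ (c : ℝ) (x : EuclideanSpace ℝ (Fin n)), p (c • x) = c ^ d * p x) :
    p 0 = 0 := by
  have := hhom 0 0
  simpa [zero_pow (by omega : d ≠ 0)] using this

-- derivative of p along a line
lemma aux_line_deriv (hp : ContDiff ℝ 1 p) (x y : EuclideanSpace ℝ (Fin n)) (t : ℝ) :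
    HasDerivAt (fun t : ℝ => p (x + t • (y - x)))
      (fderiv ℝ p (x + t • (y - x)) (y - x)) t := by
  have hc : HasDerivAt (fun t : ℝ => x + t • (y - x)) (y - x) t := by
    simpa using ((hasDerivAt_id t).smul_const (y - x)).const_add x
  exact ((hp.differentiable one_ne_zero _).hasFDerivAt.comp_hasDerivAt t hc)

-- inner (gradient p x) v = fderiv
lemma aux_inner_grad (_hp : ContDiff ℝ 1 p) (x v : EuclideanSpace ℝ (Fin n)) :
    (inner ℝ (gradient p x) v : ℝ) = fderiv ℝ p x v := by
  rw [gradient, InnerProductSpace.toDual_symm_apply]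

-- quasiconvex implies convex
lemma aux_quasi_convex (hd : Even d) (hd1 : 1 ≤ d)
    (hhom : ∀ (c : ℝ) (x : EuclideanSpace ℝ (Fin n)), p (c • x) = c ^ d * p x)
    (hq : ∀ α : ℝ, Convex ℝ {x : EuclideanSpace ℝ (Fin n) | p x ≤ α}) :
    ConvexOn ℝ Set.univ p := by
  have hp0 : p 0 = 0 := aux_p0 hd1 hhom
  have hnn : ∀ x, 0 ≤ p x := by
    intro x
    by_contra h
    push_neg at h
    have hmx : p (-x) = p x := by
      rw [← neg_one_smul ℝ x, hhom, hd.neg_one_pow, one_mul]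
    have hconv := hq (p x)
    have h0 : (0 : EuclideanSpace ℝ (Fin n)) ∈ {z | p z ≤ p x} := by
      have hx1 : x ∈ {z | p z ≤ p x} := mem_setOf_eq ▸ le_rfl
      have := hconv hx1
        (show (-x) ∈ {z | p z ≤ p x} from hmx.le)
        (by norm_num : (0:ℝ) ≤ (1/2:ℝ)) (by norm_num : (0:ℝ) ≤ (1/2:ℝ)) (by norm_num)
      have e : (1/2 : ℝ) • x + (1/2 : ℝ) • (-x) = (0 : EuclideanSpace ℝ (Fin n)) := by
        module
      rwa [e] at this
    simp only [mem_setOf_eq, hp0] at h0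
    linarith
  -- membership lemma
  have hmem : ∀ (x : EuclideanSpace ℝ (Fin n)) (s : ℝ), 0 < s → p x ≤ s ^ d →
      p (s⁻¹ • x) ≤ 1 := by
    intro x s hs hxs
    rw [hhom]
    calc s⁻¹ ^ d * p x ≤ s⁻¹ ^ d * s ^ d := by
          apply mul_le_mul_of_nonneg_left hxs (by positivity)
      _ = 1 := by rw [← mul_pow, inv_mul_cancel₀ hs.ne', one_pow]
  constructor
  · exact convex_univ
  intro x _ y _ a b ha hb hab
  set A : ℝ := (p x) ^ (d⁻¹ : ℝ) with hA
  set B : ℝ := (p y) ^ (d⁻¹ : ℝ) with hB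
  have hAnn : 0 ≤ A := Real.rpow_nonneg (hnn x) _
  have hBnn : 0 ≤ B := Real.rpow_nonneg (hnn y) _
  have hdR : (d : ℝ) ≠ 0 := Nat.cast_ne_zero.2 (by omega)
  have hAd : A ^ d = p x := by
    rw [hA, ← Real.rpow_natCast (_ ^ _), ← Real.rpow_mul (hnn x),
      inv_mul_cancel₀ hdR, Real.rpow_one]
  have hBd : B ^ d = p y := by
    rw [hB, ← Real.rpow_natCast (_ ^ _), ← Real.rpow_mul (hnn y),
      inv_mul_cancel₀ hdR, Real.rpow_one]
  have key : ∀ ε : ℝ, 0 < ε → p (a • x + b • y) ≤ (a * A + b * B + ε) ^ d := by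
    intro ε hε
    set s := A + ε with hs
    set r := B + ε with hr
    have hs0 : 0 < s := by positivity
    have hr0 : 0 < r := by positivity
    have hxs : p x ≤ s ^ d := by
      rw [← hAd]; exact pow_le_pow_left₀ hAnn (by linarith) d
    have hyr : p y ≤ r ^ d := by
      rw [← hBd]; exact pow_le_pow_left₀ hBnn (by linarith) d
    set D := a * s + b * r with hD
    have hD0 : 0 < D := by
      rcases eq_or_lt_of_le ha with h | h
      · have hb1 : b = 1 := by linarith
        rw [hD, ← h, hb1]; simpa using hr0
      · have : 0 ≤ b * r := mul_nonneg hb hr0.le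
        nlinarith
    have hu : p (s⁻¹ • x) ≤ 1 := hmem x s hs0 hxs
    have hv : p (r⁻¹ • y) ≤ 1 := hmem y r hr0 hyr
    have hw : p ((a * s / D) • (s⁻¹ • x) + (b * r / D) • (r⁻¹ • y)) ≤ 1 := by
      refine hq 1 hu hv (by positivity) (by positivity) ?_
      field_simp
      linarith [hD]
    have heq : a • x + b • y =
        D • ((a * s / D) • (s⁻¹ • x) + (b * r / D) • (r⁻¹ • y)) := by
      rw [smul_add, smul_smul, smul_smul, smul_smul, smul_smul]
      congr 1
      · congr 1; field_simp
      · congr 1; field_simp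
    calc p (a • x + b • y) = D ^ d * p _ := by rw [heq, hhom]
      _ ≤ D ^ d * 1 := mul_le_mul_of_nonneg_left hw (by positivity)
      _ = (a * A + b * B + ε) ^ d := by
          have hDeq : D = a * A + b * B + ε := by
            rw [hD, hs, hr]; linear_combination ε * hab
          rw [mul_one, hDeq]
  -- take the limit ε → 0⁺
  have hlim : Tendsto (fun ε : ℝ => (a * A + b * B + ε) ^ d) (nhdsWithin 0 (Ioi 0))
      (nhds ((a * A + b * B) ^ d)) := by
    have h1 : ContinuousAt (fun ε : ℝ => (a * A + b * B + ε) ^ d) 0 := by fun_prop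
    have h2 := h1.continuousWithinAt (s := Ioi 0)
    simpa [ContinuousWithinAt] using h2
  have hle : p (a • x + b • y) ≤ (a * A + b * B) ^ d := by
    refine ge_of_tendsto hlim ?_
    filter_upwards [self_mem_nhdsWithin] with ε hε
    exact key ε hε
  have hpow : (a * A + b * B) ^ d ≤ a * A ^ d + b * B ^ d := by
    have := hd.convexOn_pow (𝕜 := ℝ)
    have := this.2 (mem_univ A) (mem_univ B) ha hb hab
    simpa [smul_eq_mul] using this
  calc p (a • x + b • y) ≤ (a * A + b * B) ^ d := hle
    _ ≤ a * A ^ d + b * B ^ d := hpow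
    _ = a • p x + b • p y := by rw [hAd, hBd]; simp [smul_eq_mul]

-- pseudoconvex implies quasiconvex
lemma aux_pseudo_quasi (hp : ContDiff ℝ 1 p)
    (hps : ∀ x y : EuclideanSpace ℝ (Fin n),
        (0 : ℝ) ≤ inner ℝ (gradient p x) (y - x) → p x ≤ p y) :
    ∀ α : ℝ, Convex ℝ {x : EuclideanSpace ℝ (Fin n) | p x ≤ α} := by
  intro α x hx y hy a b ha hb hab
  simp only [mem_setOf_eq] at hx hy ⊢
  -- write a • x + b • y = x + b • (y - x)
  have hxy : a • x + b • y = x + b • (y - x) := by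
    have : a = 1 - b := by linarith
    rw [this]; module
  rw [hxy]
  set g : ℝ → ℝ := fun t => p (x + t • (y - x)) with hg
  have hgc : ContinuousOn g (Icc 0 1) := by
    apply Continuous.continuousOn
    have : Continuous fun t : ℝ => x + t • (y - x) := by continuity
    exact (hp.continuous).comp this
  obtain ⟨t, htI, htmax⟩ := isCompact_Icc.exists_isMaxOn (Set.nonempty_Icc.2 zero_le_one) hgc
  have hb1 : b ∈ Icc (0:ℝ) 1 := ⟨hb, by linarith⟩
  have hgb : g b ≤ g t := htmax hb1
  rcases eq_or_lt_of_le htI.1 with h0 | h0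
  · -- t = 0
    have : g t = p x := by rw [← h0, hg]; simp
    calc g b ≤ g t := hgb
      _ = p x := this
      _ ≤ α := hx
  rcases eq_or_lt_of_le htI.2 with h1 | h1
  · have : g t = p y := by rw [hg, h1]; simp
    calc g b ≤ g t := hgb
      _ = p y := this
      _ ≤ α := hy
  · -- interior max
    have hloc : IsLocalMax g t := by
      have : Icc (0:ℝ) 1 ∈ nhds t := Icc_mem_nhds h0 h1
      exact htmax.isLocalMax this
    have hder := aux_line_deriv hp x y t
    have hzero : fderiv ℝ p (x + t • (y - x)) (y - x) = 0 :=
      hloc.hasDerivAt_eq_zero hder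
    set z := x + t • (y - x) with hz
    have hinner : (inner ℝ (gradient p z) (y - z) : ℝ) = 0 := by
      rw [aux_inner_grad hp]
      have : y - z = (1 - t) • (y - x) := by rw [hz]; module
      rw [this, map_smul, smul_eq_mul, hzero, mul_zero]
    have hpz : p z ≤ p y := hps z y (by rw [hinner])
    calc g b ≤ g t := hgb
      _ = p z := rfl
      _ ≤ p y := hpz
      _ ≤ α := hy

-- convex implies pseudoconvex
lemma aux_convex_pseudo (hp : ContDiff ℝ 1 p) (hc : ConvexOn ℝ Set.univ p) :
    ∀ x y : EuclideanSpace ℝ (Fin n),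
      (0 : ℝ) ≤ inner ℝ (gradient p x) (y - x) → p x ≤ p y := by
  intro x y hxy
  set g : ℝ → ℝ := fun t => p (x + t • (y - x)) with hg
  have hgconv : ConvexOn ℝ Set.univ g := by
    have := hc.comp_affineMap (AffineMap.lineMap x y : ℝ →ᵃ[ℝ] EuclideanSpace ℝ (Fin n))
    have he : ∀ t : ℝ, (p ∘ (AffineMap.lineMap x y : ℝ →ᵃ[ℝ] _)) t = g t := by
      intro t
      simp only [Function.comp_apply, AffineMap.lineMap_apply_module, hg]
      congr 1
      module
    have hpre : ((AffineMap.lineMap x y : ℝ →ᵃ[ℝ] EuclideanSpace ℝ (Fin n)) ⁻¹' univ) = univ := by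
      simp
    rw [hpre] at this
    exact this.congr (fun t _ => he t)
  have hder : HasDerivAt g (fderiv ℝ p x (y - x)) 0 := by
    have := aux_line_deriv hp x y 0
    simpa using this
  have hslope := hgconv.le_slope_of_hasDerivAt (mem_univ (0:ℝ)) (mem_univ (1:ℝ))
    zero_lt_one hder
  rw [slope_def_field] at hslope
  have hg0 : g 0 = p x := by simp [hg]
  have hg1 : g 1 = p y := by simp [hg]
  rw [aux_inner_grad hp] at hxy
  have : (0:ℝ) ≤ (g 1 - g 0) / (1 - 0) := le_trans hxy hslope
  rw [hg0, hg1] at this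
  linarith [this]

theorem stmt_4 (n d : ℕ) (p : EuclideanSpace ℝ (Fin n) → ℝ)
    (hp : ContDiff ℝ 1 p) (hd : Even d) (hd1 : 1 ≤ d)
    (hhom : ∀ (c : ℝ) (x : EuclideanSpace ℝ (Fin n)), p (c • x) = c ^ d * p x) :
    ((∀ α : ℝ, Convex ℝ {x : EuclideanSpace ℝ (Fin n) | p x ≤ α}) ↔ ConvexOn ℝ Set.univ p) ∧
    ((∀ x y : EuclideanSpace ℝ (Fin n),
        (0 : ℝ) ≤ inner ℝ (gradient p x) (y - x) → p x ≤ p y) ↔ ConvexOn ℝ Set.univ p) := by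
  constructor
  · constructor
    · exact aux_quasi_convex hd hd1 hhom
    · intro hc α
      have := hc.convex_le α
      simpa using this
  · constructor
    · intro hps
      exact aux_quasi_convex hd hd1 hhom (aux_pseudo_quasi hp hps)
    · exact aux_convex_pseudo hp
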